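/- Let H be a vertex-minimal finite simple graph with θ(H) ≤ 7 and χ'_s(H) > 13. Then H contains no 4-cycle x₁x₂x₃x₄ in which all four vertices have degree 3 and all three neighbors of x₁ have degree 3. -/

import Mathlib

open SimpleGraph

variable {V : Type*}

/-- Two edges are at distance at most 2 (they "see" each other): distinct and
some endpoint of one equals or is adjacent to some endpoint of the other. -/
def EdgeSees (G : SimpleGraph V) (e e' : Sym2 V) : Prop :=
  e ≠ e' ∧ ∃ a ∈ e, ∃ b ∈ e', a = b ∨ G.Adj a b

/-- `G` admits a strong `N`-edge-coloring. -/
def HasStrongColoring (G : SimpleGraph V) (N : ℕ) : Prop :=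
  ∃ f : G.edgeSet → Fin N, ∀ e e' : G.edgeSet, EdgeSees G e.val e'.val → f e ≠ f e'

/-- `G − v`: delete the vertex `v` (remove all edges incident to it). -/
def DelV (G : SimpleGraph V) (v : V) : SimpleGraph V where
  Adj a b := G.Adj a b ∧ a ≠ v ∧ b ≠ v
  symm := ⟨fun _ _ h => ⟨h.1.symm, h.2.2, h.2.1⟩⟩
  loopless := ⟨fun a h => G.loopless.irrefl a h.1⟩

lemma edgeSees_symm (G : SimpleGraph V) {e e' : Sym2 V} (h : EdgeSees G e e') :
    EdgeSees G e' e := by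
  obtain ⟨hne, a, ha, b, hb, hab⟩ := h
  exact ⟨hne.symm, b, hb, a, ha, hab.imp Eq.symm SimpleGraph.Adj.symm⟩

lemma mem_delV_edgeSet {G : SimpleGraph V} {v : V} {e : Sym2 V} :
    e ∈ (DelV G v).edgeSet ↔ e ∈ G.edgeSet ∧ v ∉ e := by
  induction e using Sym2.ind with
  | _ a b =>
    simp only [SimpleGraph.mem_edgeSet, Sym2.mem_iff]
    show (G.Adj a b ∧ a ≠ v ∧ b ≠ v) ↔ G.Adj a b ∧ ¬(v = a ∨ v = b)
    push_neg
    exact ⟨fun ⟨h, h1, h2⟩ => ⟨h, h1.symm, h2.symm⟩, fun ⟨h, h1, h2⟩ => ⟨h, h1.symm, h2.symm⟩⟩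

lemma third_nbr [Fintype V] (H : SimpleGraph V) [DecidableRel H.Adj] {v a b : V}
    (hd : H.degree v = 3) (ha : H.Adj v a) (hb : H.Adj v b) (hab : a ≠ b) :
    ∃ w, H.Adj v w ∧ w ≠ a ∧ w ≠ b ∧ ∀ c, H.Adj v c → c = a ∨ c = b ∨ c = w := by
  classical
  have hsub : ({a, b} : Finset V) ⊆ H.neighborFinset v := by
    intro c hc
    rw [Finset.mem_insert, Finset.mem_singleton] at hc
    rcases hc with rfl | rfl
    · exact (H.mem_neighborFinset v c).2 ha
    · exact (H.mem_neighborFinset v c).2 hb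
  have hcard : (H.neighborFinset v \ {a, b}).card = 1 := by
    rw [Finset.card_sdiff_of_subset hsub, card_neighborFinset_eq_degree, hd, Finset.card_pair hab]
  obtain ⟨w, hw⟩ := Finset.card_eq_one.1 hcard
  have hwmem : w ∈ H.neighborFinset v \ {a, b} := by
    rw [hw]; exact Finset.mem_singleton_self w
  rw [Finset.mem_sdiff, mem_neighborFinset, Finset.mem_insert, Finset.mem_singleton] at hwmem
  push_neg at hwmem
  refine ⟨w, hwmem.1, hwmem.2.1, hwmem.2.2, ?_⟩
  intro c hc
  by_cases h1 : c = a; · exact Or.inl h1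
  by_cases h2 : c = b; · exact Or.inr (Or.inl h2)
  have : c ∈ H.neighborFinset v \ {a, b} := by
    rw [Finset.mem_sdiff, mem_neighborFinset, Finset.mem_insert, Finset.mem_singleton]
    exact ⟨hc, by tauto⟩
  rw [hw, Finset.mem_singleton] at this
  exact Or.inr (Or.inr this)

lemma two_nbrs [Fintype V] (H : SimpleGraph V) [DecidableRel H.Adj] {v a : V}
    (hd : H.degree v = 3) (ha : H.Adj v a) :
    ∃ z₁ z₂, H.Adj v z₁ ∧ H.Adj v z₂ ∧ z₁ ≠ a ∧ z₂ ≠ a ∧ z₁ ≠ z₂ ∧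
      ∀ c, H.Adj v c → c = a ∨ c = z₁ ∨ c = z₂ := by
  classical
  have hcard : ((H.neighborFinset v).erase a).card = 2 := by
    rw [Finset.card_erase_of_mem ((H.mem_neighborFinset v a).2 ha),
      card_neighborFinset_eq_degree, hd]
  obtain ⟨z₁, z₂, hzz, hz⟩ := Finset.card_eq_two.1 hcard
  have m1 : z₁ ∈ (H.neighborFinset v).erase a := by rw [hz]; simp
  have m2 : z₂ ∈ (H.neighborFinset v).erase a := by rw [hz]; simp
  rw [Finset.mem_erase, mem_neighborFinset] at m1 m2
  refine ⟨z₁, z₂, m1.2, m2.2, m1.1, m2.1, hzz, fun c hc => ?_⟩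
  by_cases h : c = a; · exact Or.inl h
  have : c ∈ (H.neighborFinset v).erase a :=
    Finset.mem_erase.2 ⟨h, (H.mem_neighborFinset v c).2 hc⟩
  rw [hz, Finset.mem_insert, Finset.mem_singleton] at this
  tauto

/-- θ ≤ 7, χ'ₛ > 13: no 4-cycle x₁x₂x₃x₄ all of degree 3 where all three
neighbors of x₁ have degree 3 (x₁ is a 3(D)-vertex). -/
theorem stmt17 [Fintype V] (H : SimpleGraph V) [DecidableRel H.Adj]
    (hore : ∀ u w, H.Adj u w → H.degree u + H.degree w ≤ 7)
    (hnc : ¬ HasStrongColoring H 13)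
    (hmin : ∀ v, HasStrongColoring (DelV H v) 13) :
    ¬ ∃ x₁ x₂ x₃ x₄ : V, H.Adj x₁ x₂ ∧ H.Adj x₂ x₃ ∧ H.Adj x₃ x₄ ∧ H.Adj x₄ x₁ ∧
      x₁ ≠ x₃ ∧ x₂ ≠ x₄ ∧
      H.degree x₁ = 3 ∧ H.degree x₂ = 3 ∧ H.degree x₃ = 3 ∧ H.degree x₄ = 3 ∧
      (∀ y, H.Adj x₁ y → H.degree y = 3) := by
  classical
  rintro ⟨x₁, x₂, x₃, x₄, h12, h23, h34, h41, h13, h24, d1, d2, d3, d4, h3D⟩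
  obtain ⟨f, hf⟩ := hmin x₁
  -- third neighbors
  obtain ⟨y, h1y, hyx2, hyx4, hnbr1⟩ := third_nbr H d1 h12 h41.symm h24
  obtain ⟨w₂, hw2, _, _, hnbr2⟩ := third_nbr H d2 h12.symm h23 h13
  obtain ⟨w₄, hw4, _, _, hnbr4⟩ := third_nbr H d4 h41 h34.symm h13
  obtain ⟨z₁, z₂, hz1, hz2, _, _, hzz, hnbry⟩ := two_nbrs H (h3D y h1y) h1y.symm
  -- degree bounds
  have dy : H.degree y = 3 := h3D y h1y
  have dw2 : H.degree w₂ ≤ 4 := by have := hore x₂ w₂ hw2; omega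
  have dw4 : H.degree w₄ ≤ 4 := by have := hore x₄ w₄ hw4; omega
  have dz1 : H.degree z₁ ≤ 4 := by have := hore y z₁ hz1; omega
  have dz2 : H.degree z₂ ≤ 4 := by have := hore y z₂ hz2; omega
  -- incidence cardinalities
  have cardInc : ∀ u v : V, H.Adj u v →
      ((H.incidenceFinset v).erase s(u, v)).card = H.degree v - 1 := by
    intro u v huv
    rw [Finset.card_erase_of_mem, card_incidenceFinset_eq_degree]
    exact (H.mem_incidenceFinset _ _).2 ((H.mk'_mem_incidenceSet_right_iff).2 huv)
  -- the buckets
  set A₁ := (H.incidenceFinset x₂).erase s(x₁, x₂) with hA₁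
  set A₂ := (H.incidenceFinset x₄).erase s(x₁, x₄) with hA₂
  set A₃ := (H.incidenceFinset y).erase s(x₁, y) with hA₃
  set C := ((H.incidenceFinset x₃).erase s(x₂, x₃)).erase s(x₃, x₄) with hC
  set B₂ := (H.incidenceFinset w₂).erase s(x₂, w₂) with hB₂
  set B₄ := (H.incidenceFinset w₄).erase s(x₄, w₄) with hB₄
  set Z₁ := (H.incidenceFinset z₁).erase s(y, z₁) with hZ₁
  set Z₂ := (H.incidenceFinset z₂).erase s(y, z₂) with hZ₂
  have cA₁ : A₁.card ≤ 2 := by rw [hA₁, cardInc x₁ x₂ h12]; omega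
  have cA₂ : A₂.card ≤ 2 := by rw [hA₂, cardInc x₁ x₄ h41.symm]; omega
  have cA₃ : A₃.card ≤ 2 := by rw [hA₃, cardInc x₁ y h1y]; omega
  have cB₂ : B₂.card ≤ 3 := by rw [hB₂, cardInc x₂ w₂ hw2]; omega
  have cB₄ : B₄.card ≤ 3 := by rw [hB₄, cardInc x₄ w₄ hw4]; omega
  have cZ₁ : Z₁.card ≤ 3 := by rw [hZ₁, cardInc y z₁ hz1]; omega
  have cZ₂ : Z₂.card ≤ 3 := by rw [hZ₂, cardInc y z₂ hz2]; omega
  have cC : C.card ≤ 1 := by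
    have hm : s(x₃, x₄) ∈ (H.incidenceFinset x₃).erase s(x₂, x₃) := by
      refine Finset.mem_erase.2 ⟨?_, (H.mem_incidenceFinset _ _).2
        ((H.mk'_mem_incidenceSet_left_iff).2 h34)⟩
      intro h
      rw [Sym2.eq_iff] at h
      rcases h with ⟨h, _⟩ | ⟨_, h⟩
      · exact h23.ne' h
      · exact h24 h.symm
    rw [hC, Finset.card_erase_of_mem hm, cardInc x₂ x₃ h23, d3]
  -- cover card bounds
  have hu5 : ∀ S₁ S₂ S₃ S₄ S₅ : Finset (Sym2 V),
      (S₁ ∪ S₂ ∪ S₃ ∪ S₄ ∪ S₅).card ≤ S₁.card + S₂.card + S₃.card + S₄.card + S₅.card := by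
    intro S₁ S₂ S₃ S₄ S₅
    have t1 := Finset.card_union_le (S₁ ∪ S₂ ∪ S₃ ∪ S₄) S₅
    have t2 := Finset.card_union_le (S₁ ∪ S₂ ∪ S₃) S₄
    have t3 := Finset.card_union_le (S₁ ∪ S₂) S₃
    have t4 := Finset.card_union_le S₁ S₂
    omega
  have card1 : (A₁ ∪ A₂ ∪ A₃ ∪ C ∪ B₂).card ≤ 10 := by
    have := hu5 A₁ A₂ A₃ C B₂; omega
  have card2 : (A₁ ∪ A₂ ∪ A₃ ∪ C ∪ B₄).card ≤ 10 := by
    have := hu5 A₁ A₂ A₃ C B₄; omega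
  have card3 : (A₁ ∪ A₂ ∪ A₃ ∪ Z₁ ∪ Z₂).card ≤ 12 := by
    have := hu5 A₁ A₂ A₃ Z₁ Z₂; omega
  -- generic facts about an edge of `H - x₁`
  have covers : ∀ s, s ∈ (DelV H x₁).edgeSet →
      (∀ v : V, v ∈ s → s ∈ H.incidenceFinset v) ∧ (∀ z : V, s ≠ s(x₁, z)) := by
    intro s hd
    obtain ⟨hsH, hx1s⟩ := (mem_delV_edgeSet).1 hd
    constructor
    · exact fun v hv => (H.mem_incidenceFinset _ _).2 ⟨hsH, hv⟩
    · exact fun z h => hx1s (by rw [h]; exact Sym2.mem_mk_left x₁ z)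
  have cover1 : ∀ s, s ∈ (DelV H x₁).edgeSet → EdgeSees H s(x₁, x₂) s →
      s ∈ A₁ ∪ A₂ ∪ A₃ ∪ C ∪ B₂ := by
    intro s hd hsee
    obtain ⟨hmem, hnex⟩ := covers s hd
    have hx1s : x₁ ∉ s := ((mem_delV_edgeSet).1 hd).2
    obtain ⟨hne, a, ha, b, hb, hab⟩ := hsee
    have hbx1 : b ≠ x₁ := fun h => hx1s (h ▸ hb)
    have hbmem : b = x₂ ∨ b = x₄ ∨ b = y ∨ b = x₃ ∨ b = w₂ := by
      rcases Sym2.mem_iff.1 ha with rfl | rfl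
      · rcases hab with h | h
        · exact absurd h.symm hbx1
        · rcases hnbr1 b h with h' | h' | h'
          · exact Or.inl h'
          · exact Or.inr (Or.inl h')
          · exact Or.inr (Or.inr (Or.inl h'))
      · rcases hab with h | h
        · exact Or.inl h.symm
        · rcases hnbr2 b h with h' | h' | h'
          · exact absurd h' hbx1
          · exact Or.inr (Or.inr (Or.inr (Or.inl h')))
          · exact Or.inr (Or.inr (Or.inr (Or.inr h')))
    simp only [hA₁, hA₂, hA₃, hC, hB₂, Finset.mem_union, Finset.mem_erase]
    rcases hbmem with h | h | h | h | h <;> rw [h] at hb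
    · exact Or.inl (Or.inl (Or.inl (Or.inl ⟨hnex x₂, hmem x₂ hb⟩)))
    · exact Or.inl (Or.inl (Or.inl (Or.inr ⟨hnex x₄, hmem x₄ hb⟩)))
    · exact Or.inl (Or.inl (Or.inr ⟨hnex y, hmem y hb⟩))
    · by_cases h23' : s = s(x₂, x₃)
      · refine Or.inl (Or.inl (Or.inl (Or.inl ⟨hnex x₂, hmem x₂ ?_⟩)))
        rw [h23']; exact Sym2.mem_mk_left _ _
      by_cases h34' : s = s(x₃, x₄)
      · refine Or.inl (Or.inl (Or.inl (Or.inr ⟨hnex x₄, hmem x₄ ?_⟩)))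
        rw [h34']; exact Sym2.mem_mk_right _ _
      · exact Or.inl (Or.inr ⟨h34', h23', hmem x₃ hb⟩)
    · by_cases hw' : s = s(x₂, w₂)
      · refine Or.inl (Or.inl (Or.inl (Or.inl ⟨hnex x₂, hmem x₂ ?_⟩)))
        rw [hw']; exact Sym2.mem_mk_left _ _
      · exact Or.inr ⟨hw', hmem w₂ hb⟩
  have cover2 : ∀ s, s ∈ (DelV H x₁).edgeSet → EdgeSees H s(x₁, x₄) s →
      s ∈ A₁ ∪ A₂ ∪ A₃ ∪ C ∪ B₄ := by
    intro s hd hsee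
    obtain ⟨hmem, hnex⟩ := covers s hd
    have hx1s : x₁ ∉ s := ((mem_delV_edgeSet).1 hd).2
    obtain ⟨hne, a, ha, b, hb, hab⟩ := hsee
    have hbx1 : b ≠ x₁ := fun h => hx1s (h ▸ hb)
    have hbmem : b = x₂ ∨ b = x₄ ∨ b = y ∨ b = x₃ ∨ b = w₄ := by
      rcases Sym2.mem_iff.1 ha with rfl | rfl
      · rcases hab with h | h
        · exact absurd h.symm hbx1
        · rcases hnbr1 b h with h' | h' | h'
          · exact Or.inl h'
          · exact Or.inr (Or.inl h')
          · exact Or.inr (Or.inr (Or.inl h'))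
      · rcases hab with h | h
        · exact Or.inr (Or.inl h.symm)
        · rcases hnbr4 b h with h' | h' | h'
          · exact absurd h' hbx1
          · exact Or.inr (Or.inr (Or.inr (Or.inl h')))
          · exact Or.inr (Or.inr (Or.inr (Or.inr h')))
    simp only [hA₁, hA₂, hA₃, hC, hB₄, Finset.mem_union, Finset.mem_erase]
    rcases hbmem with h | h | h | h | h <;> rw [h] at hb
    · exact Or.inl (Or.inl (Or.inl (Or.inl ⟨hnex x₂, hmem x₂ hb⟩)))
    · exact Or.inl (Or.inl (Or.inl (Or.inr ⟨hnex x₄, hmem x₄ hb⟩)))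
    · exact Or.inl (Or.inl (Or.inr ⟨hnex y, hmem y hb⟩))
    · by_cases h23' : s = s(x₂, x₃)
      · refine Or.inl (Or.inl (Or.inl (Or.inl ⟨hnex x₂, hmem x₂ ?_⟩)))
        rw [h23']; exact Sym2.mem_mk_left _ _
      by_cases h34' : s = s(x₃, x₄)
      · refine Or.inl (Or.inl (Or.inl (Or.inr ⟨hnex x₄, hmem x₄ ?_⟩)))
        rw [h34']; exact Sym2.mem_mk_right _ _
      · exact Or.inl (Or.inr ⟨h34', h23', hmem x₃ hb⟩)
    · by_cases hw' : s = s(x₄, w₄)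
      · refine Or.inl (Or.inl (Or.inl (Or.inr ⟨hnex x₄, hmem x₄ ?_⟩)))
        rw [hw']; exact Sym2.mem_mk_left _ _
      · exact Or.inr ⟨hw', hmem w₄ hb⟩
  have cover3 : ∀ s, s ∈ (DelV H x₁).edgeSet → EdgeSees H s(x₁, y) s →
      s ∈ A₁ ∪ A₂ ∪ A₃ ∪ Z₁ ∪ Z₂ := by
    intro s hd hsee
    obtain ⟨hmem, hnex⟩ := covers s hd
    have hx1s : x₁ ∉ s := ((mem_delV_edgeSet).1 hd).2
    obtain ⟨hne, a, ha, b, hb, hab⟩ := hsee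
    have hbx1 : b ≠ x₁ := fun h => hx1s (h ▸ hb)
    have hbmem : b = x₂ ∨ b = x₄ ∨ b = y ∨ b = z₁ ∨ b = z₂ := by
      rcases Sym2.mem_iff.1 ha with rfl | rfl
      · rcases hab with h | h
        · exact absurd h.symm hbx1
        · rcases hnbr1 b h with h' | h' | h'
          · exact Or.inl h'
          · exact Or.inr (Or.inl h')
          · exact Or.inr (Or.inr (Or.inl h'))
      · rcases hab with h | h
        · exact Or.inr (Or.inr (Or.inl h.symm))
        · rcases hnbry b h with h' | h' | h'
          · exact absurd h' hbx1
          · exact Or.inr (Or.inr (Or.inr (Or.inl h')))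
          · exact Or.inr (Or.inr (Or.inr (Or.inr h')))
    simp only [hA₁, hA₂, hA₃, hZ₁, hZ₂, Finset.mem_union, Finset.mem_erase]
    rcases hbmem with h | h | h | h | h <;> rw [h] at hb
    · exact Or.inl (Or.inl (Or.inl (Or.inl ⟨hnex x₂, hmem x₂ hb⟩)))
    · exact Or.inl (Or.inl (Or.inl (Or.inr ⟨hnex x₄, hmem x₄ hb⟩)))
    · exact Or.inl (Or.inl (Or.inr ⟨hnex y, hmem y hb⟩))
    · by_cases hw' : s = s(y, z₁)
      · refine Or.inl (Or.inl (Or.inr ⟨hnex y, hmem y ?_⟩))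
        rw [hw']; exact Sym2.mem_mk_left _ _
      · exact Or.inl (Or.inr ⟨hw', hmem z₁ hb⟩)
    · by_cases hw' : s = s(y, z₂)
      · refine Or.inl (Or.inl (Or.inr ⟨hnex y, hmem y ?_⟩))
        rw [hw']; exact Sym2.mem_mk_left _ _
      · exact Or.inr ⟨hw', hmem z₂ hb⟩
  -- extended color function on all of Sym2 V
  set fext : Sym2 V → Fin 13 :=
    fun s => if h : s ∈ (DelV H x₁).edgeSet then f ⟨s, h⟩ else 0 with hfextdef
  have hfext_eq : ∀ (s : Sym2 V) (h : s ∈ (DelV H x₁).edgeSet), fext s = f ⟨s, h⟩ := by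
    intro s h
    rw [hfextdef]
    exact dif_pos h
  -- choose the three new colors
  have exc : ∀ t : Finset (Fin 13), t.card ≤ 12 → ∃ c, c ∉ t := by
    intro t ht
    by_contra hx
    push_neg at hx
    have hsub : (Finset.univ : Finset (Fin 13)) ⊆ t := fun c _ => hx c
    have := Finset.card_le_card hsub
    rw [Finset.card_fin] at this
    omega
  obtain ⟨c₃, hc3⟩ := exc ((A₁ ∪ A₂ ∪ A₃ ∪ Z₁ ∪ Z₂).image fext)
    (le_trans Finset.card_image_le card3)
  obtain ⟨c₁, hc1⟩ := exc ((A₁ ∪ A₂ ∪ A₃ ∪ C ∪ B₂).image fext ∪ {c₃}) (by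
    have h1 := Finset.card_union_le ((A₁ ∪ A₂ ∪ A₃ ∪ C ∪ B₂).image fext) ({c₃} : Finset (Fin 13))
    have h2 : ((A₁ ∪ A₂ ∪ A₃ ∪ C ∪ B₂).image fext).card ≤ 10 :=
      le_trans Finset.card_image_le card1
    have h3 : ({c₃} : Finset (Fin 13)).card = 1 := Finset.card_singleton _
    omega)
  obtain ⟨c₂, hc2⟩ := exc ((A₁ ∪ A₂ ∪ A₃ ∪ C ∪ B₄).image fext ∪ {c₃, c₁}) (by
    have h1 := Finset.card_union_le ((A₁ ∪ A₂ ∪ A₃ ∪ C ∪ B₄).image fext) ({c₃, c₁} : Finset (Fin 13))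
    have h2 : ((A₁ ∪ A₂ ∪ A₃ ∪ C ∪ B₄).image fext).card ≤ 10 :=
      le_trans Finset.card_image_le card2
    have h3 : ({c₃, c₁} : Finset (Fin 13)).card ≤ 2 :=
      le_trans (Finset.card_insert_le _ _) (by rw [Finset.card_singleton])
    omega)
  have hne13 : c₁ ≠ c₃ := fun h => hc1 (Finset.mem_union_right _ (by simp [h]))
  have hne21 : c₂ ≠ c₁ := fun h => hc2 (Finset.mem_union_right _ (by simp [h]))
  have hne23 : c₂ ≠ c₃ := fun h => hc2 (Finset.mem_union_right _ (by simp [h]))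
  -- avoidance facts
  have hK₁ : ∀ s, s ∈ (DelV H x₁).edgeSet → EdgeSees H s(x₁, x₂) s → c₁ ≠ fext s := by
    intro s hd hsee h
    exact hc1 (Finset.mem_union_left _
      (by rw [h]; exact Finset.mem_image_of_mem fext (cover1 s hd hsee)))
  have hK₂ : ∀ s, s ∈ (DelV H x₁).edgeSet → EdgeSees H s(x₁, x₄) s → c₂ ≠ fext s := by
    intro s hd hsee h
    exact hc2 (Finset.mem_union_left _
      (by rw [h]; exact Finset.mem_image_of_mem fext (cover2 s hd hsee)))
  have hK₃ : ∀ s, s ∈ (DelV H x₁).edgeSet → EdgeSees H s(x₁, y) s → c₃ ≠ fext s := by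
    intro s hd hsee h
    exact hc3 (by rw [h]; exact Finset.mem_image_of_mem fext (cover3 s hd hsee))
  -- edges at x₁ are exactly the three special edges
  have hnotinc : ∀ s : Sym2 V, s ∈ H.edgeSet → s ≠ s(x₁, x₂) → s ≠ s(x₁, x₄) →
      s ≠ s(x₁, y) → s ∈ (DelV H x₁).edgeSet := by
    intro s hs p1 p2 p3
    rw [mem_delV_edgeSet]
    refine ⟨hs, fun hx => ?_⟩
    obtain ⟨b, rfl⟩ := Sym2.mem_iff_exists.1 hx
    rcases hnbr1 b (H.mem_edgeSet.1 hs) with rfl | rfl | rfl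
    · exact p1 rfl
    · exact p2 rfl
    · exact p3 rfl
  -- transfer of EdgeSees to the deleted graph
  have seesDel : ∀ s t : Sym2 V, s ∈ (DelV H x₁).edgeSet → t ∈ (DelV H x₁).edgeSet →
      EdgeSees H s t → EdgeSees (DelV H x₁) s t := by
    intro s t hs ht hsee
    obtain ⟨hne, a, ha, b, hb, hab⟩ := hsee
    refine ⟨hne, a, ha, b, hb, ?_⟩
    rcases hab with h | h
    · exact Or.inl h
    · exact Or.inr ⟨h, fun hh => ((mem_delV_edgeSet).1 hs).2 (hh ▸ ha),
        fun hh => ((mem_delV_edgeSet).1 ht).2 (hh ▸ hb)⟩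
  -- the new coloring
  set gg : H.edgeSet → Fin 13 := fun e =>
    if e.1 = s(x₁, x₂) then c₁ else if e.1 = s(x₁, x₄) then c₂
    else if e.1 = s(x₁, y) then c₃ else fext e.1 with hggdef
  have gspec : ∀ e : H.edgeSet,
      (e.1 = s(x₁, x₂) ∧ gg e = c₁) ∨ (e.1 = s(x₁, x₄) ∧ gg e = c₂) ∨
      (e.1 = s(x₁, y) ∧ gg e = c₃) ∨
      (∃ h : e.1 ∈ (DelV H x₁).edgeSet, gg e = f ⟨e.1, h⟩) := by
    intro e
    by_cases p1 : e.1 = s(x₁, x₂)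
    · exact Or.inl ⟨p1, by rw [hggdef]; simp only [if_pos p1]⟩
    by_cases p2 : e.1 = s(x₁, x₄)
    · exact Or.inr (Or.inl ⟨p2, by rw [hggdef]; simp only [if_neg p1, if_pos p2]⟩)
    by_cases p3 : e.1 = s(x₁, y)
    · exact Or.inr (Or.inr (Or.inl ⟨p3, by
        rw [hggdef]; simp only [if_neg p1, if_neg p2, if_pos p3]⟩))
    · refine Or.inr (Or.inr (Or.inr ⟨hnotinc e.1 e.2 p1 p2 p3, ?_⟩))
      rw [hggdef]
      simp only [if_neg p1, if_neg p2, if_neg p3]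
      exact hfext_eq e.1 (hnotinc e.1 e.2 p1 p2 p3)
  -- gg is a strong 13-coloring of H, contradiction
  refine hnc ⟨gg, ?_⟩
  intro e e' hsee
  have hne := hsee.1
  rcases gspec e with ⟨p, hp⟩ | ⟨p, hp⟩ | ⟨p, hp⟩ | ⟨pd, hp⟩ <;>
    rcases gspec e' with ⟨q, hq⟩ | ⟨q, hq⟩ | ⟨q, hq⟩ | ⟨qd, hq⟩ <;>
    rw [hp, hq]
  · exact absurd (p.trans q.symm) hne
  · exact hne21.symm
  · exact hne13
  · rw [← hfext_eq e'.1 qd]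
    exact hK₁ e'.1 qd (by rw [← p]; exact hsee)
  · exact hne21
  · exact absurd (p.trans q.symm) hne
  · exact hne23
  · rw [← hfext_eq e'.1 qd]
    exact hK₂ e'.1 qd (by rw [← p]; exact hsee)
  · exact hne13.symm
  · exact hne23.symm
  · exact absurd (p.trans q.symm) hne
  · rw [← hfext_eq e'.1 qd]
    exact hK₃ e'.1 qd (by rw [← p]; exact hsee)
  · rw [← hfext_eq e.1 pd]
    exact (hK₁ e.1 pd (by rw [← q]; exact edgeSees_symm H hsee)).symm
  · rw [← hfext_eq e.1 pd]
    exact (hK₂ e.1 pd (by rw [← q]; exact edgeSees_symm H hsee)).symm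
  · rw [← hfext_eq e.1 pd]
    exact (hK₃ e.1 pd (by rw [← q]; exact edgeSees_symm H hsee)).symm
  · exact hf ⟨e.1, pd⟩ ⟨e'.1, qd⟩ (seesDel e.1 e'.1 pd qd hsee)
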